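/- There are exactly 6 additively stable subsets of Φ of cardinality 4, namely the six sets of four cyclically consecutive elements of Φ. -/
import Mathlib


def Phi : Finset (ℤ × ℤ) := {(1,0),(0,1),(1,-1),(0,-1),(-1,1),(-1,0)}

def addStable (E : Finset (ℤ × ℤ)) : Prop :=
  (AddSubmonoid.closure (E : Set (ℤ × ℤ)) : Set (ℤ × ℤ)) ∩ (Phi : Set (ℤ × ℤ)) = (E : Set (ℤ × ℤ))

/-- the linear functional (x,y) ↦ a x + b y as an AddMonoidHom -/
def lin (a b : ℤ) : ℤ × ℤ →+ ℤ where
  toFun p := a * p.1 + b * p.2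
  map_zero' := by simp
  map_add' p q := by simp [Prod.fst_add, Prod.snd_add]; ring

lemma stable_of (E : Finset (ℤ × ℤ)) (a b : ℤ) (hsub : E ⊆ Phi)
    (h1 : ∀ p ∈ E, 0 ≤ a * p.1 + b * p.2)
    (h2 : ∀ p ∈ Phi, 0 ≤ a * p.1 + b * p.2 → p ∈ E) : addStable E := by
  apply Set.Subset.antisymm
  · rintro x ⟨hc, hp⟩
    have hle : AddSubmonoid.closure (E : Set (ℤ × ℤ)) ≤
        AddSubmonoid.comap (lin a b) (AddSubmonoid.nonneg ℤ) := by
      rw [AddSubmonoid.closure_le]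
      intro p hp
      exact h1 p hp
    exact h2 x hp (hle hc)
  · intro x hx
    exact ⟨AddSubmonoid.subset_closure hx, hsub hx⟩

lemma stab_sum {E : Finset (ℤ × ℤ)} (h : addStable E) {p q : ℤ × ℤ}
    (hp : p ∈ E) (hq : q ∈ E) (hphi : p + q ∈ Phi) : p + q ∈ E := by
  have hm : p + q ∈ (AddSubmonoid.closure (E : Set (ℤ × ℤ)) : Set (ℤ × ℤ)) ∩ (Phi : Set (ℤ × ℤ)) :=
    ⟨add_mem (AddSubmonoid.subset_closure hp) (AddSubmonoid.subset_closure hq), hphi⟩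
  rw [h] at hm
  exact hm

lemma key : ∀ E ∈ Phi.powerset, E.card = 4 →
    ((((1:ℤ),(-1:ℤ)) ∈ E ∧ ((0:ℤ),(1:ℤ)) ∈ E → ((1:ℤ),(0:ℤ)) ∈ E) ∧
     (((1:ℤ),(0:ℤ)) ∈ E ∧ ((-1:ℤ),(1:ℤ)) ∈ E → ((0:ℤ),(1:ℤ)) ∈ E) ∧
     (((0:ℤ),(-1:ℤ)) ∈ E ∧ ((1:ℤ),(0:ℤ)) ∈ E → ((1:ℤ),(-1:ℤ)) ∈ E) ∧
     (((-1:ℤ),(0:ℤ)) ∈ E ∧ ((1:ℤ),(-1:ℤ)) ∈ E → ((0:ℤ),(-1:ℤ)) ∈ E) ∧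
     (((0:ℤ),(1:ℤ)) ∈ E ∧ ((-1:ℤ),(0:ℤ)) ∈ E → ((-1:ℤ),(1:ℤ)) ∈ E) ∧
     (((-1:ℤ),(1:ℤ)) ∈ E ∧ ((0:ℤ),(-1:ℤ)) ∈ E → ((-1:ℤ),(0:ℤ)) ∈ E)) →
    E ∈ ({ {(1,0),(1,-1),(0,-1),(-1,0)}, {(1,-1),(0,-1),(-1,0),(-1,1)},
         {(0,-1),(-1,0),(-1,1),(0,1)}, {(-1,0),(-1,1),(0,1),(1,0)},
         {(-1,1),(0,1),(1,0),(1,-1)}, {(0,1),(1,0),(1,-1),(0,-1)} } :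
        Finset (Finset (ℤ × ℤ))) := by decide

theorem stmt_8 :
    {E : Finset (ℤ × ℤ) | E ⊆ Phi ∧ E.card = 4 ∧ addStable E} =
      ({ {(1,0),(1,-1),(0,-1),(-1,0)}, {(1,-1),(0,-1),(-1,0),(-1,1)},
         {(0,-1),(-1,0),(-1,1),(0,1)}, {(-1,0),(-1,1),(0,1),(1,0)},
         {(-1,1),(0,1),(1,0),(1,-1)}, {(0,1),(1,0),(1,-1),(0,-1)} } :
        Set (Finset (ℤ × ℤ))) ∧
    {E : Finset (ℤ × ℤ) | E ⊆ Phi ∧ E.card = 4 ∧ addStable E}.ncard = 6 := by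
  have hset : {E : Finset (ℤ × ℤ) | E ⊆ Phi ∧ E.card = 4 ∧ addStable E} =
      ({ {(1,0),(1,-1),(0,-1),(-1,0)}, {(1,-1),(0,-1),(-1,0),(-1,1)},
         {(0,-1),(-1,0),(-1,1),(0,1)}, {(-1,0),(-1,1),(0,1),(1,0)},
         {(-1,1),(0,1),(1,0),(1,-1)}, {(0,1),(1,0),(1,-1),(0,-1)} } :
        Set (Finset (ℤ × ℤ))) := by
    ext E
    constructor
    · rintro ⟨hsub, hcard, hstab⟩
      have hkey := key E (Finset.mem_powerset.mpr hsub) hcard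
        ⟨fun ⟨h1, h2⟩ => stab_sum hstab h1 h2 (by decide),
         fun ⟨h1, h2⟩ => stab_sum hstab h1 h2 (by decide),
         fun ⟨h1, h2⟩ => stab_sum hstab h1 h2 (by decide),
         fun ⟨h1, h2⟩ => stab_sum hstab h1 h2 (by decide),
         fun ⟨h1, h2⟩ => stab_sum hstab h1 h2 (by decide),
         fun ⟨h1, h2⟩ => stab_sum hstab h1 h2 (by decide)⟩
      simpa using hkey
    · intro hE
      simp only [Set.mem_insert_iff, Set.mem_singleton_iff] at hE
      rcases hE with rfl | rfl | rfl | rfl | rfl | rfl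
      · exact ⟨by decide, by decide, stable_of _ 0 (-1) (by decide) (by decide) (by decide)⟩
      · exact ⟨by decide, by decide, stable_of _ (-1) (-1) (by decide) (by decide) (by decide)⟩
      · exact ⟨by decide, by decide, stable_of _ (-1) 0 (by decide) (by decide) (by decide)⟩
      · exact ⟨by decide, by decide, stable_of _ 0 1 (by decide) (by decide) (by decide)⟩
      · exact ⟨by decide, by decide, stable_of _ 1 1 (by decide) (by decide) (by decide)⟩
      · exact ⟨by decide, by decide, stable_of _ 1 0 (by decide) (by decide) (by decide)⟩
  refine ⟨hset, ?_⟩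
  rw [hset]
  have : (({ {(1,0),(1,-1),(0,-1),(-1,0)}, {(1,-1),(0,-1),(-1,0),(-1,1)},
         {(0,-1),(-1,0),(-1,1),(0,1)}, {(-1,0),(-1,1),(0,1),(1,0)},
         {(-1,1),(0,1),(1,0),(1,-1)}, {(0,1),(1,0),(1,-1),(0,-1)} } :
        Finset (Finset (ℤ × ℤ))) : Set (Finset (ℤ × ℤ))) =
      ({ {(1,0),(1,-1),(0,-1),(-1,0)}, {(1,-1),(0,-1),(-1,0),(-1,1)},
         {(0,-1),(-1,0),(-1,1),(0,1)}, {(-1,0),(-1,1),(0,1),(1,0)},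
         {(-1,1),(0,1),(1,0),(1,-1)}, {(0,1),(1,0),(1,-1),(0,-1)} } :
        Set (Finset (ℤ × ℤ))) := by
    simp
  rw [← this, Set.ncard_coe_finset]
  decide
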